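/- Let G(x) = Σₖ |xₖ| on ℝⁿ (the ℓ¹-norm) and let q* ∈ ∂G(x*) satisfy the strict complementarity condition |q*ₖ| < 1 for all k = 1,…,n. Then x* = 0, (∂G)⁻¹ restricted appropriately is a singleton {0} in each coordinate, and there exist γ > 0 and a neighbourhood 𝒰 of 0 such that ⟨q - q*, x⟩ ≥ γ‖x‖² for all x ∈ 𝒰 and q ∈ ∂G(x). In particular, ∂‖·‖₁ is (I, γI)-strongly submonotone at (0, q*). -/

import Mathlib

open scoped RealInnerProductSpace

private lemma coord_abs_le_norm {n : ℕ} (x : EuclideanSpace ℝ (Fin n)) (k : Fin n) :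
    |x k| ≤ ‖x‖ := by
  rw [EuclideanSpace.norm_eq]
  calc |x k| = Real.sqrt (‖x k‖ ^ 2) := by rw [Real.sqrt_sq_eq_abs, Real.norm_eq_abs, abs_abs]
  _ ≤ _ := Real.sqrt_le_sqrt (Finset.single_le_sum (fun i _ => sq_nonneg ‖x i‖)
      (Finset.mem_univ k))

/-- Strict complementarity for the ℓ¹-norm subdifferential: if `q* ∈ ∂‖·‖₁(x*)`
with `|q*ₖ| < 1` for all `k`, then `x* = 0`, `(∂‖·‖₁)⁻¹(q*) = {0}`, and `∂‖·‖₁`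
is `(I, γI)`-strongly submonotone at `(0, q*)` for some `γ > 0`. -/
theorem l1_strict_complementarity_strongly_submonotone
    (n : ℕ)
    (Sd : EuclideanSpace ℝ (Fin n) → Set (EuclideanSpace ℝ (Fin n)))
    (hSd : ∀ x, Sd x = {q | ∀ k : Fin n,
      (0 < x k → q k = 1) ∧ (x k < 0 → q k = -1) ∧ (x k = 0 → |q k| ≤ 1)})
    (xs qs : EuclideanSpace ℝ (Fin n)) (hqs : qs ∈ Sd xs)
    (hstrict : ∀ k : Fin n, |qs k| < 1) :
    xs = 0
    ∧ {x : EuclideanSpace ℝ (Fin n) | qs ∈ Sd x} = {0}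
    ∧ ∃ γ : ℝ, 0 < γ ∧ ∃ 𝒰 ∈ nhds (0 : EuclideanSpace ℝ (Fin n)),
        ∀ x ∈ 𝒰, ∀ q ∈ Sd x, ⟪q - qs, x⟫ ≥ γ * ‖x‖^2 := by
  -- Any x with qs ∈ Sd x is 0.
  have key : ∀ x : EuclideanSpace ℝ (Fin n), qs ∈ Sd x → x = 0 := by
    intro x hx
    rw [hSd] at hx
    refine PiLp.ext fun k => ?_
    rcases lt_trichotomy (x k) 0 with h | h | h
    · have h1 := (hx k).2.1 h
      have h2 := hstrict k
      rw [h1] at h2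
      norm_num at h2
    · simpa using h
    · have h1 := (hx k).1 h
      have h2 := hstrict k
      rw [h1] at h2
      norm_num at h2
  have hxs0 : xs = 0 := key xs hqs
  refine ⟨hxs0, ?_, ?_⟩
  · ext x
    simp only [Set.mem_setOf_eq, Set.mem_singleton_iff]
    constructor
    · exact key x
    · rintro rfl
      rw [hxs0] at hqs
      exact hqs
  · -- find δ > 0 with δ ≤ 1 - |qs k| for all k
    obtain ⟨δ, hδ0, hδ⟩ : ∃ δ : ℝ, 0 < δ ∧ ∀ k : Fin n, δ ≤ 1 - |qs k| := by
      rcases Nat.eq_zero_or_pos n with h | h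
      · exact ⟨1, one_pos, fun k => absurd k.2 (by omega)⟩
      · have hne : (Finset.univ : Finset (Fin n)).Nonempty := by
          simpa [Finset.univ_nonempty_iff] using Fin.pos_iff_nonempty.mp h
        refine ⟨Finset.univ.inf' hne (fun k => 1 - |qs k|), ?_, ?_⟩
        · rw [Finset.lt_inf'_iff]
          intro k _
          linarith [hstrict k]
        · intro k
          exact Finset.inf'_le _ (Finset.mem_univ k)
    refine ⟨1, one_pos, Metric.ball 0 δ, Metric.ball_mem_nhds 0 hδ0, ?_⟩
    intro x hx q hq
    rw [hSd] at hq
    have hxk : ∀ k : Fin n, |x k| < δ := by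
      intro k
      calc |x k| ≤ ‖x‖ := coord_abs_le_norm x k
      _ < δ := by simpa [dist_zero_right] using hx
    have hcoord : ∀ k : Fin n, (x k) * (x k) ≤ (q k - qs k) * x k := by
      intro k
      rcases lt_trichotomy (x k) 0 with h | h | h
      · rw [(hq k).2.1 h]
        have h1 : -x k < δ := by have := hxk k; rwa [abs_of_neg h] at this
        nlinarith [hδ k, neg_abs_le (qs k), le_abs_self (qs k)]
      · simp [h]
      · rw [(hq k).1 h]
        have h1 : x k < δ := by have := hxk k; rwa [abs_of_pos h] at this
        nlinarith [hδ k, neg_abs_le (qs k), le_abs_self (qs k)]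
    have hinner : ⟪q - qs, x⟫ = ∑ k : Fin n, (q k - qs k) * x k := by
      rw [PiLp.inner_apply]
      simp [RCLike.inner_apply, mul_comm]
    have hnorm : ‖x‖ ^ 2 = ∑ k : Fin n, (x k) * (x k) := by
      rw [← real_inner_self_eq_norm_sq, PiLp.inner_apply]
      simp [RCLike.inner_apply, sq]
    rw [ge_iff_le, one_mul, hinner, hnorm]
    exact Finset.sum_le_sum fun k _ => hcoord k
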